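/- The set of integers n ≥ 2 that are NOT represented by the quaternary octagonal form p₈(2,3,4,6) is exactly {18}; that is, for every integer n ≥ 2 with n ≠ 18 there exist integers x₁, x₂, x₃, x₄ with 2P₈(x₁) + 3P₈(x₂) + 4P₈(x₃) + 6P₈(x₄) = n, and 18 admits no such representation. -/

import Mathlib

/-- The generalized octagonal number `P₈(x) = 3x² - 2x`. -/
def P8 (x : ℤ) : ℤ := 3 * x ^ 2 - 2 * x

/-! ### Elementary helpers -/

private lemma sq_emod (x : ℤ) (n : ℤ) : x ^ 2 % n = (x % n) ^ 2 % n := by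
  rw [pow_two, pow_two, Int.mul_emod]

private lemma sq3a (x : ℤ) : x ^ 2 % 3 = 0 ∨ x ^ 2 % 3 = 1 := by
  have h := sq_emod x 3
  have h3 : x % 3 = 0 ∨ x % 3 = 1 ∨ x % 3 = 2 := by omega
  rcases h3 with h3 | h3 | h3 <;> rw [h3] at h <;> norm_num at h <;> omega

private lemma sq3b (x : ℤ) : x % 3 = 0 ↔ x ^ 2 % 3 = 0 := by
  have h := sq_emod x 3
  have h3 : x % 3 = 0 ∨ x % 3 = 1 ∨ x % 3 = 2 := by omega
  rcases h3 with h3 | h3 | h3 <;> rw [h3] at h <;> norm_num at h <;> omega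

private lemma sq4a (x : ℤ) : x ^ 2 % 4 = 0 ∨ x ^ 2 % 4 = 1 := by
  have h := sq_emod x 4
  have h4 : x % 4 = 0 ∨ x % 4 = 1 ∨ x % 4 = 2 ∨ x % 4 = 3 := by omega
  rcases h4 with h4 | h4 | h4 | h4 <;> rw [h4] at h <;> norm_num at h <;> omega

/-! ### The three squares theorem (for the congruence classes we need) -/

open scoped NumberTheorySymbols

/-! ### Binary quadratic forms: minima and det-1 reduction -/

private def bQ (A B C x y : ℤ) : ℤ := A * x ^ 2 + 2 * B * x * y + C * y ^ 2

private lemma binary_det_identity (A B C p q r s : ℤ) :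
    bQ A B C p q * bQ A B C r s - (A * p * r + B * (p * s + q * r) + C * q * s) ^ 2
      = (A * C - B ^ 2) * (p * s - q * r) ^ 2 := by
  simp only [bQ]; ring

private lemma binary_min (A B C : ℤ)
    (hpos : ∀ x y : ℤ, ¬(x = 0 ∧ y = 0) → 1 ≤ bQ A B C x y) :
    ∃ p q : ℤ, ¬(p = 0 ∧ q = 0) ∧
      ∀ x y : ℤ, ¬(x = 0 ∧ y = 0) → bQ A B C p q ≤ bQ A B C x y := by
  have hne : {n : ℕ | ∃ x y : ℤ, ¬(x = 0 ∧ y = 0) ∧ bQ A B C x y = (n : ℤ)}.Nonempty := by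
    refine ⟨(bQ A B C 1 0).toNat, 1, 0, by norm_num, ?_⟩
    have h1 : 1 ≤ bQ A B C 1 0 := hpos 1 0 (by norm_num)
    omega
  obtain ⟨p, q, hpq, hval⟩ := Nat.sInf_mem hne
  refine ⟨p, q, hpq, fun x y hxy => ?_⟩
  have h1 : 1 ≤ bQ A B C x y := hpos x y hxy
  have hmem : (bQ A B C x y).toNat ∈
      {n : ℕ | ∃ x y : ℤ, ¬(x = 0 ∧ y = 0) ∧ bQ A B C x y = (n : ℤ)} :=
    ⟨x, y, hxy, by omega⟩
  have hle := Nat.sInf_le hmem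
  omega

/-- A minimal vector together with a unimodular completion. -/
private lemma binary_min_refined (A B C : ℤ)
    (hpos : ∀ x y : ℤ, ¬(x = 0 ∧ y = 0) → 1 ≤ bQ A B C x y) :
    ∃ p q r s : ℤ, p * s - q * r = 1 ∧
      (∀ x y : ℤ, ¬(x = 0 ∧ y = 0) → bQ A B C p q ≤ bQ A B C x y) := by
  obtain ⟨p, q, hpq, hmin⟩ := binary_min A B C hpos
  have hg0 : 0 < Int.gcd p q := by
    rcases Nat.eq_zero_or_pos (Int.gcd p q) with h0 | h0
    · rw [Int.gcd_eq_zero_iff] at h0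
      exact absurd h0 hpq
    · exact h0
  obtain ⟨g, hg⟩ : ∃ g : ℤ, g = (Int.gcd p q : ℤ) := ⟨_, rfl⟩
  obtain ⟨p', hp'⟩ : g ∣ p := hg ▸ Int.gcd_dvd_left p q
  obtain ⟨q', hq'⟩ : g ∣ q := hg ▸ Int.gcd_dvd_right p q
  have hg1 : (1 : ℤ) ≤ g := by rw [hg]; exact_mod_cast hg0
  have hne' : ¬(p' = 0 ∧ q' = 0) := by
    rintro ⟨rfl, rfl⟩
    exact hpq ⟨by omega, by omega⟩
  have hval : bQ A B C p q = g ^ 2 * bQ A B C p' q' := by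
    rw [hp', hq']; simp only [bQ]; ring
  have h1 : 1 ≤ bQ A B C p' q' := hpos p' q' hne'
  have hminle : bQ A B C p q ≤ bQ A B C p' q' := hmin p' q' hne'
  have hkey : (g ^ 2 - 1) * bQ A B C p' q' ≤ 0 := by nlinarith
  have hgsq : g ^ 2 ≤ 1 := by nlinarith
  have hgle : g ≤ 1 := by nlinarith [sq_nonneg (g - 1)]
  have hgeq : g = 1 := le_antisymm hgle hg1
  have hB := Int.gcd_eq_gcd_ab p q
  rw [← hg, hgeq] at hB
  exact ⟨p, q, -Int.gcdB p q, Int.gcdA p q, by linear_combination -hB, hmin⟩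

/-- Minimal value `α` of a positive binary form satisfies `3 α² ≤ 4 det`. -/
private lemma binary_min_bound (A B C p q r s : ℤ)
    (hpos : ∀ x y : ℤ, ¬(x = 0 ∧ y = 0) → 1 ≤ bQ A B C x y)
    (hbasis : p * s - q * r = 1)
    (hmin : ∀ x y : ℤ, ¬(x = 0 ∧ y = 0) → bQ A B C p q ≤ bQ A B C x y) :
    3 * (bQ A B C p q) ^ 2 ≤ 4 * (A * C - B ^ 2) := by
  have hα : 1 ≤ bQ A B C p q := hpos p q (by rintro ⟨rfl, rfl⟩; simp at hbasis)
  set α := bQ A B C p q with hαdef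
  set β := A * p * r + B * (p * s + q * r) + C * q * s with hβdef
  obtain ⟨t, ht⟩ : ∃ t : ℤ, 2 * |β + t * α| ≤ α := by
    rcases le_or_gt (2 * (β % α)) α with h | h
    · refine ⟨-(β / α), ?_⟩
      have h0 : β + -(β / α) * α = β % α := by
        rw [Int.emod_def]; ring
      rw [h0, abs_of_nonneg (Int.emod_nonneg β (by omega))]
      omega
    · refine ⟨-(β / α) - 1, ?_⟩
      have h0 : β + (-(β / α) - 1) * α = β % α - α := by
        rw [Int.emod_def]; ring
      have hlt : β % α < α := Int.emod_lt_of_pos β (by omega)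
      rw [h0, abs_of_nonpos (by omega)]
      omega
  set r' := r + t * p with hr'
  set s' := s + t * q with hs'
  have hbasis' : p * s' - q * r' = 1 := by rw [hr', hs']; linear_combination hbasis
  have hβ' : A * p * r' + B * (p * s' + q * r') + C * q * s' = β + t * α := by
    rw [hr', hs', hαdef, hβdef]; simp only [bQ]; ring
  have hdetid : α * bQ A B C r' s' - (β + t * α) ^ 2 = A * C - B ^ 2 := by
    have h := binary_det_identity A B C p q r' s'
    rw [hβ', hbasis'] at h
    simpa using h
  have hγ : α ≤ bQ A B C r' s' := by
    apply hmin
    rintro ⟨hr0, hs0⟩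
    rw [hr0, hs0] at hbasis'
    simp at hbasis'
  have h4β : 4 * (β + t * α) ^ 2 ≤ α ^ 2 := by
    nlinarith [ht, abs_nonneg (β + t * α), sq_abs (β + t * α)]
  have hprod : 0 ≤ α * bQ A B C r' s' - α ^ 2 := by nlinarith
  linarith

/-- Every value of a positive det-1 binary form is a sum of two squares. -/
private lemma binary_detOne (A B C : ℤ)
    (hpos : ∀ x y : ℤ, ¬(x = 0 ∧ y = 0) → 1 ≤ bQ A B C x y)
    (hdet : A * C - B ^ 2 = 1) (x y : ℤ) :
    ∃ r s : ℤ, bQ A B C x y = r ^ 2 + s ^ 2 := by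
  obtain ⟨p, q, r, s, hbasis, hmin⟩ := binary_min_refined A B C hpos
  have hα : 1 ≤ bQ A B C p q := hpos p q (by rintro ⟨rfl, rfl⟩; simp at hbasis)
  have hbound := binary_min_bound A B C p q r s hpos hbasis hmin
  have hα1 : bQ A B C p q = 1 := by nlinarith
  have hdetid := binary_det_identity A B C p q r s
  rw [hα1, hbasis, hdet] at hdetid
  set β := A * p * r + B * (p * s + q * r) + C * q * s with hβdef
  have hγ : bQ A B C r s = 1 + β ^ 2 := by linear_combination hdetid
  set c1 := x * s - y * r with hc1
  set c2 := y * p - x * q with hc2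
  have hx : x = c1 * p + c2 * r := by rw [hc1, hc2]; linear_combination (-x) * hbasis
  have hy : y = c1 * q + c2 * s := by rw [hc1, hc2]; linear_combination (-y) * hbasis
  refine ⟨c1 + β * c2, c2, ?_⟩
  rw [hx, hy]
  have expand : bQ A B C (c1 * p + c2 * r) (c1 * q + c2 * s) =
      bQ A B C p q * c1 ^ 2 + 2 * β * c1 * c2 + bQ A B C r s * c2 ^ 2 := by
    rw [hβdef]; simp only [bQ]; ring
  rw [expand, hα1, hγ]; ring

/-! ### Ternary quadratic forms of determinant 1 -/

private def tQ (a b c d e f x y z : ℤ) : ℤ :=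
  a * x ^ 2 + b * y ^ 2 + c * z ^ 2 + 2 * d * x * y + 2 * e * x * z + 2 * f * y * z

private def tB (a b c d e f x1 y1 z1 x2 y2 z2 : ℤ) : ℤ :=
  a * x1 * x2 + b * y1 * y2 + c * z1 * z2 + d * (x1 * y2 + x2 * y1) + e * (x1 * z2 + x2 * z1) +
    f * (y1 * z2 + y2 * z1)

private lemma ternary_min (a b c d e f : ℤ)
    (hpos : ∀ x y z : ℤ, ¬(x = 0 ∧ y = 0 ∧ z = 0) → 1 ≤ tQ a b c d e f x y z) :
    ∃ p1 p2 p3 : ℤ, ¬(p1 = 0 ∧ p2 = 0 ∧ p3 = 0) ∧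
      ∀ x y z : ℤ, ¬(x = 0 ∧ y = 0 ∧ z = 0) →
        tQ a b c d e f p1 p2 p3 ≤ tQ a b c d e f x y z := by
  have hne : {n : ℕ | ∃ x y z : ℤ, ¬(x = 0 ∧ y = 0 ∧ z = 0) ∧
      tQ a b c d e f x y z = (n : ℤ)}.Nonempty := by
    refine ⟨(tQ a b c d e f 1 0 0).toNat, 1, 0, 0, by norm_num, ?_⟩
    have h1 : 1 ≤ tQ a b c d e f 1 0 0 := hpos 1 0 0 (by norm_num)
    omega
  obtain ⟨p1, p2, p3, hp, hval⟩ := Nat.sInf_mem hne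
  refine ⟨p1, p2, p3, hp, fun x y z hxy => ?_⟩
  have h1 : 1 ≤ tQ a b c d e f x y z := hpos x y z hxy
  have hmem : (tQ a b c d e f x y z).toNat ∈ {n : ℕ | ∃ x y z : ℤ, ¬(x = 0 ∧ y = 0 ∧ z = 0) ∧
      tQ a b c d e f x y z = (n : ℤ)} := ⟨x, y, z, hxy, by omega⟩
  have hle := Nat.sInf_le hmem
  omega

private lemma complete_basis (p1 p2 p3 : ℤ)
    (h : Int.gcd ((Int.gcd p1 p2 : ℤ)) p3 = 1) :
    ∃ u1 u2 u3 v1 v2 v3 : ℤ,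
      p1 * (u2 * v3 - u3 * v2) - p2 * (u1 * v3 - u3 * v1) + p3 * (u1 * v2 - u2 * v1) = 1 := by
  by_cases hg : Int.gcd p1 p2 = 0
  · rw [Int.gcd_eq_zero_iff] at hg
    obtain ⟨rfl, rfl⟩ := hg
    -- gcd 0 p3 = |p3| = 1
    have h3 : p3 = 1 ∨ p3 = -1 := by
      have : p3.natAbs = 1 := by simpa [Int.gcd] using h
      omega
    refine ⟨0, 1, 0, -p3, 0, 0, ?_⟩
    rcases h3 with rfl | rfl <;> norm_num
  · obtain ⟨g, hgdef⟩ : ∃ g : ℤ, g = (Int.gcd p1 p2 : ℤ) := ⟨_, rfl⟩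
    have hgpos : 0 < g := by
      rw [hgdef]; exact_mod_cast Nat.pos_of_ne_zero hg
    obtain ⟨a1, ha1⟩ : g ∣ p1 := hgdef ▸ Int.gcd_dvd_left p1 p2
    obtain ⟨a2, ha2⟩ : g ∣ p2 := hgdef ▸ Int.gcd_dvd_right p1 p2
    have hB1 := Int.gcd_eq_gcd_ab p1 p2
    have hB2 := Int.gcd_eq_gcd_ab g p3
    rw [← hgdef] at h
    rw [h] at hB2
    -- 1 = g * s + p3 * t
    set s := Int.gcdA g p3 with hs
    set t := Int.gcdB g p3 with ht
    set α := Int.gcdA p1 p2 with hα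
    set β := Int.gcdB p1 p2 with hβ
    have hBez1' : a1 * α + a2 * β = 1 := by
      have hgeq : p1 * α + p2 * β = g := by rw [hgdef]; exact hB1.symm
      have h1 : g * (a1 * α + a2 * β) = g * 1 := by
        calc g * (a1 * α + a2 * β) = (g * a1) * α + (g * a2) * β := by ring
          _ = p1 * α + p2 * β := by rw [← ha1, ← ha2]
          _ = g := hgeq
          _ = g * 1 := by ring
      exact mul_left_cancel₀ (ne_of_gt hgpos) h1
    refine ⟨-β, α, 0, -t * a1, -t * a2, s, ?_⟩
    have hgoal : p1 * (α * s - 0 * (-t * a2)) - p2 * ((-β) * s - 0 * (-t * a1)) +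
        p3 * ((-β) * (-t * a2) - α * (-t * a1)) =
        (g * s + p3 * t) * (a1 * α + a2 * β) := by
      rw [ha1, ha2]; ring
    push_cast at hB2
    rw [hgoal, hBez1', mul_one]
    linarith [hB2]

set_option maxHeartbeats 1600000 in
private lemma ternary_detOne (a b c d e f : ℤ)
    (hpos : ∀ x y z : ℤ, ¬(x = 0 ∧ y = 0 ∧ z = 0) → 1 ≤ tQ a b c d e f x y z)
    (hdet : a * (b * c - f ^ 2) - d * (d * c - e * f) + e * (d * f - b * e) = 1)
    (x0 y0 z0 : ℤ) :
    ∃ r s t : ℤ, tQ a b c d e f x0 y0 z0 = r ^ 2 + s ^ 2 + t ^ 2 := by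
  -- Step 1: a minimal vector
  obtain ⟨p1, p2, p3, hp, hmin⟩ := ternary_min a b c d e f hpos
  -- Step 2: it is primitive
  have hprim : Int.gcd ((Int.gcd p1 p2 : ℤ)) p3 = 1 := by
    obtain ⟨g, hgdef⟩ : ∃ g : ℤ, g = ((Int.gcd ((Int.gcd p1 p2 : ℤ)) p3 : ℕ) : ℤ) := ⟨_, rfl⟩
    have hd1 : g ∣ p1 := hgdef ▸ dvd_trans (Int.gcd_dvd_left _ _) (Int.gcd_dvd_left _ _)
    have hd2 : g ∣ p2 := hgdef ▸ dvd_trans (Int.gcd_dvd_left _ _) (Int.gcd_dvd_right _ _)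
    have hd3 : g ∣ p3 := hgdef ▸ Int.gcd_dvd_right _ _
    obtain ⟨a1, ha1⟩ := hd1
    obtain ⟨a2, ha2⟩ := hd2
    obtain ⟨a3, ha3⟩ := hd3
    have hgne : g ≠ 0 := by
      rintro rfl
      simp only [zero_mul] at ha1 ha2 ha3
      exact hp ⟨ha1, ha2, ha3⟩
    have hg1 : 1 ≤ g := by
      have : 0 ≤ g := hgdef ▸ Int.natCast_nonneg _
      omega
    have hane : ¬(a1 = 0 ∧ a2 = 0 ∧ a3 = 0) := by
      rintro ⟨rfl, rfl, rfl⟩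
      simp only [mul_zero] at ha1 ha2 ha3
      exact hp ⟨ha1, ha2, ha3⟩
    have hval : tQ a b c d e f p1 p2 p3 = g ^ 2 * tQ a b c d e f a1 a2 a3 := by
      rw [ha1, ha2, ha3]; simp only [tQ]; ring
    have h1 : 1 ≤ tQ a b c d e f a1 a2 a3 := hpos a1 a2 a3 hane
    have hminle : tQ a b c d e f p1 p2 p3 ≤ tQ a b c d e f a1 a2 a3 := hmin a1 a2 a3 hane
    have hkey : (g ^ 2 - 1) * tQ a b c d e f a1 a2 a3 ≤ 0 := by nlinarith
    have hgsq : g ^ 2 ≤ 1 := by nlinarith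
    have hgle : g ≤ 1 := by nlinarith [sq_nonneg (g - 1)]
    have : g = 1 := le_antisymm hgle hg1
    omega
  -- Step 3: complete to a unimodular basis
  obtain ⟨u1, u2, u3, v1, v2, v3, hdetB⟩ := complete_basis p1 p2 p3 hprim
  -- Gram matrix entries
  set m := tQ a b c d e f p1 p2 p3 with hm
  set g12 := tB a b c d e f p1 p2 p3 u1 u2 u3 with hg12
  set g13 := tB a b c d e f p1 p2 p3 v1 v2 v3 with hg13
  set g22 := tQ a b c d e f u1 u2 u3 with hg22
  set g23 := tB a b c d e f u1 u2 u3 v1 v2 v3 with hg23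
  set g33 := tQ a b c d e f v1 v2 v3 with hg33
  have hm1 : 1 ≤ m := hpos p1 p2 p3 hp
  -- values of the form on the new basis
  have expandG : ∀ X Y Z : ℤ,
      tQ a b c d e f (X * p1 + Y * u1 + Z * v1) (X * p2 + Y * u2 + Z * v2)
        (X * p3 + Y * u3 + Z * v3) =
      m * X ^ 2 + g22 * Y ^ 2 + g33 * Z ^ 2 + 2 * g12 * X * Y + 2 * g13 * X * Z +
        2 * g23 * Y * Z := by
    intro X Y Z
    rw [hm, hg12, hg13, hg22, hg23, hg33]
    simp only [tQ, tB]; ring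
  -- nonzero coordinates give nonzero vectors
  have combo_ne : ∀ X Y Z : ℤ, ¬(X = 0 ∧ Y = 0 ∧ Z = 0) →
      ¬(X * p1 + Y * u1 + Z * v1 = 0 ∧ X * p2 + Y * u2 + Z * v2 = 0 ∧
        X * p3 + Y * u3 + Z * v3 = 0) := by
    intro X Y Z hXYZ ⟨h1, h2, h3⟩
    apply hXYZ
    refine ⟨?_, ?_, ?_⟩
    · linear_combination (u2 * v3 - u3 * v2) * h1 - (u1 * v3 - u3 * v1) * h2 +
        (u1 * v2 - u2 * v1) * h3 - X * hdetB
    · linear_combination (-(p2 * v3 - p3 * v2)) * h1 + (p1 * v3 - p3 * v1) * h2 -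
        (p1 * v2 - p2 * v1) * h3 - Y * hdetB
    · linear_combination (p2 * u3 - p3 * u2) * h1 - (p1 * u3 - p3 * u1) * h2 +
        (p1 * u2 - p2 * u1) * h3 - Z * hdetB
  -- the new Gram matrix still has determinant 1
  have hdetG : m * (g22 * g33 - g23 ^ 2) - g12 * (g12 * g33 - g23 * g13) +
      g13 * (g12 * g23 - g22 * g13) = 1 := by
    have hID : m * (g22 * g33 - g23 ^ 2) - g12 * (g12 * g33 - g23 * g13) +
        g13 * (g12 * g23 - g22 * g13) =
        (a * (b * c - f ^ 2) - d * (d * c - e * f) + e * (d * f - b * e)) *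
          (p1 * (u2 * v3 - u3 * v2) - p2 * (u1 * v3 - u3 * v1) +
            p3 * (u1 * v2 - u2 * v1)) ^ 2 := by
      rw [hm, hg12, hg13, hg22, hg23, hg33]
      simp only [tQ, tB]; ring
    rw [hID, hdet, hdetB]; norm_num
  -- the projected binary form
  set A' := m * g22 - g12 ^ 2 with hA'
  set B' := m * g23 - g12 * g13 with hB'
  set C' := m * g33 - g13 ^ 2 with hC'
  have hδ : A' * C' - B' ^ 2 = m := by
    have : A' * C' - B' ^ 2 = m * (m * (g22 * g33 - g23 ^ 2) - g12 * (g12 * g33 - g23 * g13) +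
        g13 * (g12 * g23 - g22 * g13)) := by
      rw [hA', hB', hC']; ring
    rw [this, hdetG, mul_one]
  have hA'pos : 1 ≤ A' := by
    have hval : m * A' = tQ a b c d e f ((-g12) * p1 + m * u1 + 0 * v1)
        ((-g12) * p2 + m * u2 + 0 * v2) ((-g12) * p3 + m * u3 + 0 * v3) := by
      rw [expandG, hA']; ring
    have hge : m ≤ tQ a b c d e f ((-g12) * p1 + m * u1 + 0 * v1)
        ((-g12) * p2 + m * u2 + 0 * v2) ((-g12) * p3 + m * u3 + 0 * v3) := by
      apply hmin
      apply combo_ne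
      rintro ⟨-, hm0, -⟩
      omega
    nlinarith
  -- positivity of the binary form (A', B', C')
  have hposB : ∀ y z : ℤ, ¬(y = 0 ∧ z = 0) → 1 ≤ bQ A' B' C' y z := by
    intro y z hyz
    have hid : A' * bQ A' B' C' y z = (A' * y + B' * z) ^ 2 + m * z ^ 2 := by
      simp only [bQ]; linear_combination (z ^ 2) * hδ
    have hcase : 1 ≤ (A' * y + B' * z) ^ 2 + m * z ^ 2 := by
      rcases eq_or_ne z 0 with rfl | hz
      · have hy : y ≠ 0 := by tauto
        have h1 : 1 ≤ A' * y ∨ A' * y ≤ -1 := by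
          rcases (by omega : 1 ≤ y ∨ y ≤ -1) with h | h
          · left; nlinarith
          · right; nlinarith
        rcases h1 with h | h <;> nlinarith
      · have h1 : 1 ≤ z ^ 2 := by
          rcases (by omega : 1 ≤ z ∨ z ≤ -1) with h | h <;> nlinarith
        nlinarith [sq_nonneg (A' * y + B' * z)]
    -- conclude 1 ≤ bQ
    by_contra hcon
    push_neg at hcon
    have hle0 : bQ A' B' C' y z ≤ 0 := by omega
    nlinarith
  -- minimal value of the binary form
  obtain ⟨P, Q, R, S, hbasis2, hmin2⟩ := binary_min_refined A' B' C' hposB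
  have hPQne : ¬(P = 0 ∧ Q = 0) := by rintro ⟨rfl, rfl⟩; simp at hbasis2
  set μ := bQ A' B' C' P Q with hμ
  have hμ1 : 1 ≤ μ := hposB P Q hPQne
  have hbound2 := binary_min_bound A' B' C' P Q R S hposB hbasis2 hmin2
  rw [hδ] at hbound2
  -- lift the binary minimal vector
  set l := g12 * P + g13 * Q with hl
  obtain ⟨x₀, hx₀⟩ : ∃ x₀ : ℤ, 4 * (m * x₀ + l) ^ 2 ≤ m ^ 2 := by
    rcases le_or_gt (2 * (l % m)) m with h | h
    · refine ⟨-(l / m), ?_⟩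
      have h0 : m * -(l / m) + l = l % m := by rw [Int.emod_def]; ring
      have h1 : 0 ≤ l % m := Int.emod_nonneg l (by omega)
      rw [h0]; nlinarith
    · refine ⟨-(l / m) - 1, ?_⟩
      have h0 : m * (-(l / m) - 1) + l = l % m - m := by rw [Int.emod_def]; ring
      have h1 : l % m < m := Int.emod_lt_of_pos l (by omega)
      rw [h0]; nlinarith
  -- key inequality forcing m = 1
  have hliftval : m * (m * x₀ ^ 2 + g22 * P ^ 2 + g33 * Q ^ 2 + 2 * g12 * x₀ * P +
      2 * g13 * x₀ * Q + 2 * g23 * P * Q) = (m * x₀ + l) ^ 2 + μ := by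
    rw [hl, hμ, hA', hB', hC']  -- hμ unfolds bQ? no
    simp only [bQ]
    ring
  have hliftge : m ≤ m * x₀ ^ 2 + g22 * P ^ 2 + g33 * Q ^ 2 + 2 * g12 * x₀ * P +
      2 * g13 * x₀ * Q + 2 * g23 * P * Q := by
    rw [← expandG]
    apply hmin
    apply combo_ne
    rintro ⟨-, hP0, hQ0⟩
    exact hPQne ⟨hP0, hQ0⟩
  have h3m : 3 * m ^ 2 ≤ 4 * μ := by nlinarith
  have hm_eq : m = 1 := by
    have hle : m ≤ 1 := by
      by_contra hcon
      push_neg at hcon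
      have h2 : 2 ≤ m := hcon
      have h9 : 9 * m ^ 4 ≤ 16 * μ ^ 2 := by
        nlinarith [mul_nonneg (by linarith : (0:ℤ) ≤ 4 * μ - 3 * m ^ 2)
          (by nlinarith [hμ1, sq_nonneg m] : (0:ℤ) ≤ 4 * μ + 3 * m ^ 2)]
      have e1 : 0 ≤ (m - 2) * m ^ 3 := mul_nonneg (by omega) (by positivity)
      have e2 : 0 ≤ (m - 2) * m ^ 2 := mul_nonneg (by omega) (by positivity)
      have e3 : 0 ≤ (m - 2) * m := mul_nonneg (by omega) (by omega)
      nlinarith [hbound2, h9, e1, e2, e3]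
    omega
  -- Step 4: express the given value in the new basis
  set X := x0 * (u2 * v3 - u3 * v2) - y0 * (u1 * v3 - u3 * v1) + z0 * (u1 * v2 - u2 * v1)
    with hX
  set Y := -(x0 * (p2 * v3 - p3 * v2) - y0 * (p1 * v3 - p3 * v1) + z0 * (p1 * v2 - p2 * v1))
    with hY
  set Z := x0 * (p2 * u3 - p3 * u2) - y0 * (p1 * u3 - p3 * u1) + z0 * (p1 * u2 - p2 * u1)
    with hZ
  have hco1 : X * p1 + Y * u1 + Z * v1 = x0 := by
    rw [hX, hY, hZ]; linear_combination x0 * hdetB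
  have hco2 : X * p2 + Y * u2 + Z * v2 = y0 := by
    rw [hX, hY, hZ]; linear_combination y0 * hdetB
  have hco3 : X * p3 + Y * u3 + Z * v3 = z0 := by
    rw [hX, hY, hZ]; linear_combination z0 * hdetB
  have hvalue : tQ a b c d e f x0 y0 z0 =
      m * X ^ 2 + g22 * Y ^ 2 + g33 * Z ^ 2 + 2 * g12 * X * Y + 2 * g13 * X * Z +
        2 * g23 * Y * Z := by
    rw [← expandG, hco1, hco2, hco3]
  -- with m = 1, split off a square
  have hsplit : tQ a b c d e f x0 y0 z0 = (X + g12 * Y + g13 * Z) ^ 2 + bQ A' B' C' Y Z := by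
    rw [hvalue, hA', hB', hC', hm_eq]
    simp only [bQ]; ring
  -- the binary part has determinant 1 and is positive
  have hdet2 : A' * C' - B' ^ 2 = 1 := by rw [hδ, hm_eq]
  obtain ⟨r, s, hrs⟩ := binary_detOne A' B' C' hposB hdet2 Y Z
  exact ⟨X + g12 * Y + g13 * Z, r, s, by rw [hsplit, hrs]; ring⟩



private lemma sq_emodC (x : ℤ) (n : ℤ) : x ^ 2 % n = (x % n) ^ 2 % n := by
  rw [pow_two, pow_two, Int.mul_emod]

private lemma jacobi_neg_one {b : ℕ} (hb : Odd b) (h4 : b % 4 = 1) : J(-1 | b) = 1 := by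
  have hb2 : b % 2 = 1 := Nat.odd_iff.mp hb
  rw [jacobiSym.at_neg_one hb, ZMod.χ₄_nat_eq_if_mod_four, if_neg (by omega), if_pos h4]

private lemma jacobi_neg_one' {b : ℕ} (hb : Odd b) (h4 : b % 4 = 3) : J(-1 | b) = -1 := by
  have hb2 : b % 2 = 1 := Nat.odd_iff.mp hb
  rw [jacobiSym.at_neg_one hb, ZMod.χ₄_nat_eq_if_mod_four, if_neg (by omega), if_neg (by omega)]

private lemma zmod_unit_of (N r : ℕ) (y : ℤ) (h : (N : ℤ) ∣ ((r : ℤ) * y - 1)) :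
    IsUnit ((r : ℕ) : ZMod N) := by
  apply IsUnit.of_mul_eq_one ((y : ℤ) : ZMod N)
  have h0 : (((r : ℤ) * y - 1 : ℤ) : ZMod N) = 0 := by
    rw [ZMod.intCast_zmod_eq_zero_iff_dvd]; exact h
  push_cast at h0
  linear_combination h0


private lemma sqrt_modp (K : ℤ) (p : ℕ) [Fact p.Prime] (hJ : J(-K | p) = 1) :
    ∃ w₀ : ℤ, (p : ℤ) ∣ w₀ ^ 2 + K := by
  obtain ⟨s, hs⟩ := ZMod.isSquare_of_jacobiSym_eq_one hJ
  refine ⟨(s.val : ℤ), ?_⟩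
  rw [← ZMod.intCast_zmod_eq_zero_iff_dvd]
  push_cast
  rw [ZMod.natCast_rightInverse s]
  push_cast at hs
  linear_combination -hs

private lemma w_from (K w₀ cq : ℤ) (p : ℕ) (hpw : (p : ℤ) ∣ w₀ ^ 2 + K)
    (hcq : (p : ℤ) + 1 = K * cq) :
    ∃ w : ℤ, K ∣ w + 1 ∧ (p : ℤ) ∣ w ^ 2 + K := by
  have hKcq : cq * K = (p : ℤ) + 1 := by linarith
  obtain ⟨m, hm⟩ := hpw
  refine ⟨w₀ * cq * K + (p : ℤ), ⟨w₀ * cq + cq, by linear_combination hcq⟩,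
    m + (w₀ + 1) * (w₀ * ((p : ℤ) + 2) + p), ?_⟩
  have expand : (w₀ * cq * K + (p : ℤ)) ^ 2 + K
      = (w₀ ^ 2 + K) + (p : ℤ) * ((w₀ + 1) * (w₀ * ((p : ℤ) + 2) + p)) := by
    linear_combination (w₀ ^ 2 * (cq * K + (p : ℤ) + 1) + 2 * w₀ * (p : ℤ)) * hKcq
  rw [expand, hm]; ring

/-- Case A : `K % 4 = 1`. -/
private lemma magic_A (K : ℤ) (hK : 7 ≤ K) (h4 : K % 4 = 1) :
    ∃ q w : ℤ, 1 ≤ q ∧ K ∣ q + 1 ∧ K ∣ w + 1 ∧ q ∣ w ^ 2 + K := by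
  obtain ⟨Kn, hKcast⟩ : ∃ Kn : ℕ, (Kn : ℤ) = K := ⟨K.toNat, Int.toNat_of_nonneg (by omega)⟩
  have hKn7 : 7 ≤ Kn := by omega
  haveI : NeZero (4 * Kn) := ⟨by omega⟩
  have hcast21 : ((2 * Kn - 1 : ℕ) : ℤ) = 2 * K - 1 := by
    push_cast [Nat.cast_sub (by omega : 1 ≤ 2 * Kn)]
    omega
  have hunit : IsUnit (((2 * Kn - 1 : ℕ) : ZMod (4 * Kn))) := by
    apply zmod_unit_of (4 * Kn) (2 * Kn - 1) (-(2 * K + 1))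
    refine ⟨-K, ?_⟩
    rw [hcast21]
    push_cast
    rw [hKcast]
    ring
  obtain ⟨p, hpgt, hpp, hpmod⟩ :=
    Nat.forall_exists_prime_gt_and_eq_mod hunit (2 * Kn + 8)
  have hmod : p % (4 * Kn) = (2 * Kn - 1) % (4 * Kn) := by
    rwa [ZMod.natCast_eq_natCast_iff'] at hpmod
  have hmod' : p % (4 * Kn) = 2 * Kn - 1 := by
    rw [hmod, Nat.mod_eq_of_lt (by omega)]
  obtain ⟨t, hpt⟩ : ∃ t, p = 4 * Kn * t + (2 * Kn - 1) := by
    refine ⟨p / (4 * Kn), ?_⟩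
    conv_lhs => rw [← Nat.div_add_mod p (4 * Kn)]
    rw [hmod']
  have hptZ : (p : ℤ) = 4 * ((Kn : ℤ) * t) + 2 * K - 1 := by
    calc (p : ℤ) = ((4 * Kn * t + (2 * Kn - 1) : ℕ) : ℤ) := by rw [← hpt]
      _ = 4 * ((Kn : ℤ) * t) + 2 * K - 1 := by
          push_cast [hcast21]
          rw [hKcast]
          ring
  obtain ⟨T, hT⟩ : ∃ T : ℤ, (p : ℤ) = 4 * T + 2 * K - 1 := ⟨(Kn : ℤ) * t, hptZ⟩
  have hp4 : p % 4 = 1 := by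
    have h1 : (p : ℤ) % 4 = 1 := by omega
    omega
  have hoddp : Odd p := by
    rcases hpp.eq_two_or_odd with h | h
    · omega
    · exact Nat.odd_iff.mpr h
  have hoddK : Odd Kn := Nat.odd_iff.mpr (by omega)
  have hKdvd : (K : ℤ) ∣ (p : ℤ) + 1 := by
    refine ⟨4 * t + 2, ?_⟩
    rw [hptZ, ← hKcast]
    push_cast
    ring
  have hJ : J(-K | p) = 1 := by
    have hsplit : J(-K | p) = J(-1 | p) * J((Kn : ℤ) | p) := by
      rw [← jacobiSym.mul_left]
      rw [show (-1 : ℤ) * (Kn : ℤ) = -K by rw [hKcast]; ring]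
    have h2 : J((Kn : ℤ) | p) = J((p : ℤ) | Kn) :=
      jacobiSym.quadratic_reciprocity_one_mod_four (by omega) hoddp
    have h3 : J((p : ℤ) | Kn) = J(-1 | Kn) := by
      apply jacobiSym.mod_left'
      show (p : ℤ) ≡ -1 [ZMOD (Kn : ℤ)]
      rw [hKcast]
      exact Int.ModEq.symm (Int.modEq_iff_dvd.mpr (by exact ⟨4 * t + 2, by rw [hptZ]; push_cast; rw [hKcast]; ring⟩))
    rw [hsplit, h2, h3, jacobi_neg_one hoddp hp4, jacobi_neg_one hoddK (by omega)]
    norm_num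
  haveI : Fact p.Prime := ⟨hpp⟩
  obtain ⟨w₀, hpw₀⟩ := sqrt_modp K p hJ
  obtain ⟨cq, hcq⟩ := hKdvd
  obtain ⟨w, hw1, hw2⟩ := w_from K w₀ cq p hpw₀ (by linarith)
  exact ⟨(p : ℤ), w, by omega, ⟨cq, hcq⟩, hw1, hw2⟩

/-- Case B : `K % 8 = 2` or `K % 8 = 6`. -/
private lemma magic_B (K : ℤ) (hK : 7 ≤ K) (h8 : K % 8 = 2 ∨ K % 8 = 6) :
    ∃ q w : ℤ, 1 ≤ q ∧ K ∣ q + 1 ∧ K ∣ w + 1 ∧ q ∣ w ^ 2 + K := by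
  obtain ⟨K', hK'⟩ : ∃ K' : ℕ, ((2 * K' : ℕ) : ℤ) = K := by
    refine ⟨(K.toNat) / 2, ?_⟩
    have : (K.toNat : ℤ) = K := Int.toNat_of_nonneg (by omega)
    push_cast
    omega
  obtain ⟨Kn, hKncast, hKn2⟩ : ∃ Kn : ℕ, (Kn : ℤ) = K ∧ Kn = 2 * K' :=
    ⟨2 * K', by push_cast at hK' ⊢; omega, rfl⟩
  have hK'cast : ((K' : ℕ) : ℤ) = K / 2 := by omega
  have hKn7 : 7 ≤ Kn := by omega
  haveI : NeZero (4 * Kn) := ⟨by omega⟩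
  -- residue: K-1 if K%8=2, 2K-1 if K%8=6
  obtain ⟨r, hrcast, hrinv⟩ : ∃ r : ℕ,
      (((r : ℤ) = K - 1 ∧ K % 8 = 2) ∨ ((r : ℤ) = 2 * K - 1 ∧ K % 8 = 6)) ∧
      IsUnit ((r : ℕ) : ZMod (4 * Kn)) := by
    rcases h8 with h2 | h6
    · refine ⟨Kn - 1, Or.inl ⟨by omega, h2⟩, ?_⟩
      apply zmod_unit_of (4 * Kn) (Kn - 1) (-(K + 1) * (2 * K + 1))
      obtain ⟨j, hj⟩ : ∃ j : ℤ, K = 4 * j + 2 := ⟨(K - 2) / 4, by omega⟩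
      refine ⟨-(8 * j ^ 2 + 9 * j + 2), ?_⟩
      have hc : ((Kn - 1 : ℕ) : ℤ) = K - 1 := by omega
      rw [hc]
      push_cast
      rw [hKncast, hj]
      ring
    · refine ⟨2 * Kn - 1, Or.inr ⟨by omega, h6⟩, ?_⟩
      apply zmod_unit_of (4 * Kn) (2 * Kn - 1) (-(2 * K + 1))
      refine ⟨-K, ?_⟩
      have hc : ((2 * Kn - 1 : ℕ) : ℤ) = 2 * K - 1 := by omega
      rw [hc]
      push_cast
      rw [hKncast]
      ring
  obtain ⟨p, hpgt, hpp, hpmod⟩ :=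
    Nat.forall_exists_prime_gt_and_eq_mod hrinv (2 * Kn + 8)
  have hmod : p % (4 * Kn) = r % (4 * Kn) := by
    rwa [ZMod.natCast_eq_natCast_iff'] at hpmod
  have hmod' : p % (4 * Kn) = r := by
    rw [hmod, Nat.mod_eq_of_lt (by omega)]
  obtain ⟨t, hpt⟩ : ∃ t, p = 4 * Kn * t + r := by
    refine ⟨p / (4 * Kn), ?_⟩
    conv_lhs => rw [← Nat.div_add_mod p (4 * Kn)]
    rw [hmod']
  -- integer form with the 8-divisible leading term
  have hK2 : 2 * (K' : ℤ) = K := by push_cast at hK'; linarith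
  have hptZ : (p : ℤ) = 8 * ((K' : ℤ) * t) + (r : ℤ) := by
    have hnat : 4 * Kn * t = 8 * (K' * t) := by rw [hKn2]; ring
    calc (p : ℤ) = ((8 * (K' * t) + r : ℕ) : ℤ) := by rw [← hnat, ← hpt]
      _ = 8 * ((K' : ℤ) * t) + r := by push_cast; ring
  have hptZ' : ∃ U : ℤ, (p : ℤ) = 8 * U + (r : ℤ) := ⟨(K' : ℤ) * t, hptZ⟩
  obtain ⟨U, hU⟩ := hptZ'
  have hKdvd : (K : ℤ) ∣ (p : ℤ) + 1 := by
    rcases hrcast with ⟨hr, -⟩ | ⟨hr, -⟩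
    · exact ⟨4 * t + 2 * 1 - 1, by rw [hptZ, hr]; push_cast; linear_combination (4 * (t : ℤ)) * hK2⟩
    · exact ⟨4 * t + 2, by rw [hptZ, hr]; push_cast; linear_combination (4 * (t : ℤ)) * hK2⟩
  -- p mod 8 and parity facts
  have hKmod : K % 8 = 2 ∨ K % 8 = 6 := h8
  have hp8 : (p % 8 = 1 ∧ K % 8 = 2) ∨ (p % 8 = 3 ∧ K % 8 = 6) := by
    rcases hrcast with ⟨hr, h2⟩ | ⟨hr, h6⟩
    · left
      have : (p : ℤ) % 8 = 1 := by rw [hU, hr]; omega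
      exact ⟨by omega, h2⟩
    · right
      have : (p : ℤ) % 8 = 3 := by rw [hU, hr]; omega
      exact ⟨by omega, h6⟩
  have hoddp : Odd p := by
    rcases hpp.eq_two_or_odd with h | h
    · rcases hp8 with ⟨h1, -⟩ | ⟨h1, -⟩ <;> omega
    · exact Nat.odd_iff.mpr h
  have hoddK' : Odd K' := by
    refine Nat.odd_iff.mpr ?_
    rcases hp8 with ⟨-, h2⟩ | ⟨-, h2⟩ <;> omega
  have hK'dvd : ((K' : ℕ) : ℤ) ∣ (p : ℤ) + 1 := by
    obtain ⟨c, hc⟩ := hKdvd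
    exact ⟨2 * c, by linear_combination hc - (c : ℤ) * hK2⟩
  -- Jacobi symbol
  have hJ : J(-K | p) = 1 := by
    have hsplit : J(-K | p) = J(-1 | p) * (J((2 : ℤ) | p) * J((K' : ℤ) | p)) := by
      rw [← jacobiSym.mul_left, ← jacobiSym.mul_left]
      rw [show (-1 : ℤ) * (2 * (K' : ℤ)) = -K by rw [← hK2]; ring]
    have hmodKp : J((p : ℤ) | K') = J(-1 | K') := by
      apply jacobiSym.mod_left'
      show (p : ℤ) ≡ -1 [ZMOD ((K' : ℕ) : ℤ)]
      exact Int.ModEq.symm (Int.modEq_iff_dvd.mpr (by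
        obtain ⟨c, hc⟩ := hK'dvd
        exact ⟨c, by linear_combination hc⟩))
    rcases hp8 with ⟨hp1, hK82⟩ | ⟨hp3, hK86⟩
    · have h2' : J((2 : ℤ) | p) = 1 := by
        rw [jacobiSym.at_two hoddp, ZMod.χ₈_nat_eq_if_mod_eight,
          if_neg (by omega), if_pos (by omega)]
      have hK'p : J((K' : ℤ) | p) = J((p : ℤ) | K') :=
        jacobiSym.quadratic_reciprocity_one_mod_four (by omega) hoddp
      rw [hsplit, h2', hK'p, hmodKp, jacobi_neg_one hoddp (by omega),
        jacobi_neg_one hoddK' (by omega)]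
      norm_num
    · have h2' : J((2 : ℤ) | p) = -1 := by
        rw [jacobiSym.at_two hoddp, ZMod.χ₈_nat_eq_if_mod_eight,
          if_neg (by omega), if_neg (by omega)]
      have hK'p : J((K' : ℤ) | p) = -J((p : ℤ) | K') :=
        jacobiSym.quadratic_reciprocity_three_mod_four (by omega) (by omega)
      rw [hsplit, h2', hK'p, hmodKp, jacobi_neg_one' hoddp (by omega),
        jacobi_neg_one' hoddK' (by omega)]
      norm_num
  haveI : Fact p.Prime := ⟨hpp⟩
  obtain ⟨w₀, hpw₀⟩ := sqrt_modp K p hJ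
  obtain ⟨cq, hcq⟩ := hKdvd
  obtain ⟨w, hw1, hw2⟩ := w_from K w₀ cq p hpw₀ (by linarith)
  exact ⟨(p : ℤ), w, by omega, ⟨cq, hcq⟩, hw1, hw2⟩

/-- Case C : `K % 8 = 3`. -/
private lemma magic_C (K : ℤ) (hK : 7 ≤ K) (h83 : K % 8 = 3) :
    ∃ q w : ℤ, 1 ≤ q ∧ K ∣ q + 1 ∧ K ∣ w + 1 ∧ q ∣ w ^ 2 + K := by
  obtain ⟨Kn, hKcast⟩ : ∃ Kn : ℕ, (Kn : ℤ) = K := ⟨K.toNat, Int.toNat_of_nonneg (by omega)⟩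
  have hKn7 : 7 ≤ Kn := by omega
  haveI : NeZero Kn := ⟨by omega⟩
  have hoddK : Odd Kn := Nat.odd_iff.mpr (by omega)
  -- the residue (Kn-1)/2
  obtain ⟨sn, hsn⟩ : ∃ sn : ℕ, 2 * sn + 1 = Kn := ⟨(Kn - 1) / 2, by omega⟩
  have hsncast : 2 * (sn : ℤ) + 1 = K := by push_cast [← hsn]; omega
  have hunit : IsUnit ((sn : ℕ) : ZMod Kn) := by
    apply zmod_unit_of Kn sn (-2)
    exact ⟨-1, by push_cast; linear_combination -hsncast + hKcast⟩
  obtain ⟨p, hpgt, hpp, hpmod⟩ :=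
    Nat.forall_exists_prime_gt_and_eq_mod hunit (2 * Kn + 8)
  have hmod : p % Kn = sn % Kn := by
    rwa [ZMod.natCast_eq_natCast_iff'] at hpmod
  have hmod' : p % Kn = sn := by
    rw [hmod, Nat.mod_eq_of_lt (by omega)]
  obtain ⟨t, hpt⟩ : ∃ t, p = Kn * t + sn := by
    refine ⟨p / Kn, ?_⟩
    conv_lhs => rw [← Nat.div_add_mod p Kn]
    rw [hmod']
  have hptZ : 2 * (p : ℤ) = 2 * ((Kn : ℤ) * t) + K - 1 := by
    calc 2 * (p : ℤ) = 2 * ((Kn * t + sn : ℕ) : ℤ) := by rw [← hpt]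
      _ = 2 * ((Kn : ℤ) * t) + K - 1 := by push_cast; linear_combination hsncast
  have hKdvd2 : (K : ℤ) ∣ 2 * (p : ℤ) + 1 := by
    refine ⟨2 * t + 1, ?_⟩
    rw [← hKcast] at hptZ ⊢
    push_cast at hptZ ⊢
    linarith
  have hoddp : Odd p := by
    rcases hpp.eq_two_or_odd with h | h
    · exfalso; omega
    · exact Nat.odd_iff.mpr h
  have hp2 : p % 2 = 1 := Nat.odd_iff.mp hoddp
  -- Jacobi symbol
  have hJ : J(-K | p) = 1 := by
    have hsplit : J(-K | p) = J(-1 | p) * J((Kn : ℤ) | p) := by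
      rw [← jacobiSym.mul_left]
      rw [show (-1 : ℤ) * (Kn : ℤ) = -K by rw [hKcast]; ring]
    have hJp : J((p : ℤ) | Kn) = J(((sn : ℕ) : ℤ) | Kn) := by
      apply jacobiSym.mod_left'
      show (p : ℤ) ≡ (sn : ℤ) [ZMOD ((Kn : ℕ) : ℤ)]
      exact Int.ModEq.symm (Int.modEq_iff_dvd.mpr ⟨t, by rw [hpt]; push_cast; ring⟩)
    have hgcd2 : Int.gcd 2 ((Kn : ℕ) : ℤ) = 1 := by
      show Int.gcd ((2 : ℕ) : ℤ) ((Kn : ℕ) : ℤ) = 1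
      rw [Int.gcd_natCast_natCast, Nat.gcd_rec]
      have : Kn % 2 = 1 := Nat.odd_iff.mp hoddK
      rw [this]
      norm_num
    have h4 : J((4 : ℤ) | Kn) = 1 := by
      have := jacobiSym.sq_one' (a := 2) (b := Kn) hgcd2
      norm_num at this
      exact this
    have hs4 : J(((sn : ℕ) : ℤ) | Kn) = J(4 * ((sn : ℕ) : ℤ) | Kn) := by
      rw [jacobiSym.mul_left, h4, one_mul]
    have hs42 : J(4 * ((sn : ℕ) : ℤ) | Kn) = J(-2 | Kn) := by
      apply jacobiSym.mod_left'
      show 4 * (sn : ℤ) ≡ -2 [ZMOD ((Kn : ℕ) : ℤ)]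
      exact Int.modEq_iff_dvd.mpr ⟨-2, by push_cast; linear_combination -2 * hsncast + 2 * hKcast⟩
    have hneg2 : J(-2 | Kn) = 1 := by
      rw [jacobiSym.at_neg_two hoddK, ZMod.χ₈'_nat_eq_if_mod_eight,
        if_neg (by omega), if_pos (by omega : Kn % 8 = 1 ∨ Kn % 8 = 3)]
    have hchain : J((p : ℤ) | Kn) = 1 := by rw [hJp, hs4, hs42, hneg2]
    rcases (by omega : p % 4 = 1 ∨ p % 4 = 3) with hp4 | hp4
    · have hKp : J((Kn : ℤ) | p) = J((p : ℤ) | Kn) :=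
        jacobiSym.quadratic_reciprocity_one_mod_four' hoddK hp4
      rw [hsplit, hKp, hchain, jacobi_neg_one hoddp hp4]
      norm_num
    · have hKp : J((Kn : ℤ) | p) = -J((p : ℤ) | Kn) :=
        jacobiSym.quadratic_reciprocity_three_mod_four (by omega) hp4
      rw [hsplit, hKp, hchain, jacobi_neg_one' hoddp hp4]
      norm_num
  haveI : Fact p.Prime := ⟨hpp⟩
  obtain ⟨w₀, hpw₀⟩ := sqrt_modp K p hJ
  obtain ⟨c, hc⟩ := hKdvd2
  have hc' : c * K = 2 * (p : ℤ) + 1 := by linarith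
  -- w₁ := w₀ * c * K + 2p  is ≡ w₀ mod p and ≡ -1 mod K
  obtain ⟨m, hm⟩ := hpw₀
  have hw₁1 : K ∣ (w₀ * c * K + 2 * (p : ℤ)) + 1 := ⟨w₀ * c + c, by linear_combination hc⟩
  have hw₁2 : (p : ℤ) ∣ (w₀ * c * K + 2 * (p : ℤ)) ^ 2 + K := by
    refine ⟨m + 2 * (w₀ + 1) * (w₀ * c * K + 2 * (p : ℤ) + w₀), ?_⟩
    linear_combination hm + (w₀ ^ 2 * (c * K + 1) + 2 * (p : ℤ) * w₀) * hc'
  -- adjust parity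
  obtain ⟨w, hw1, hw2, hwodd⟩ : ∃ w : ℤ, K ∣ w + 1 ∧ (p : ℤ) ∣ w ^ 2 + K ∧ w % 2 = 1 := by
    rcases (by omega : (w₀ * c * K + 2 * (p : ℤ)) % 2 = 1 ∨
        (w₀ * c * K + 2 * (p : ℤ)) % 2 = 0) with hpar | hpar
    · exact ⟨w₀ * c * K + 2 * (p : ℤ), hw₁1, hw₁2, hpar⟩
    · refine ⟨w₀ * c * K + 2 * (p : ℤ) + K * (p : ℤ), ?_, ?_, ?_⟩
      · obtain ⟨k1, hk1⟩ := hw₁1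
        exact ⟨k1 + (p : ℤ), by linear_combination hk1⟩
      · obtain ⟨k2, hk2⟩ := hw₁2
        exact ⟨k2 + K * (2 * (w₀ * c * K + 2 * (p : ℤ)) + K * (p : ℤ)), by linear_combination hk2⟩
      · -- K odd, p odd
        have hKodd : K % 2 = 1 := by omega
        have hpodd : (p : ℤ) % 2 = 1 := by
          have := Nat.odd_iff.mp hoddp
          omega
        obtain ⟨a1, ha1⟩ : ∃ a1, K = 2 * a1 + 1 := ⟨K / 2, by omega⟩
        obtain ⟨a2, ha2⟩ : ∃ a2, (p : ℤ) = 2 * a2 + 1 := ⟨(p : ℤ) / 2, by omega⟩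
        have : K * (p : ℤ) = 2 * (2 * a1 * a2 + a1 + a2) + 1 := by
          rw [ha1, ha2]; ring
        omega
  -- q := 2p
  have h2dvd : (2 : ℤ) ∣ w ^ 2 + K := by
    have hsq : w ^ 2 % 2 = 1 := by
      rw [sq_emodC w 2, hwodd]; norm_num
    omega
  have hcop : IsCoprime (2 : ℤ) ((p : ℕ) : ℤ) := by
    obtain ⟨j, hj⟩ : ∃ j : ℤ, (p : ℤ) = 2 * j + 1 := by
      have := Nat.odd_iff.mp hoddp
      exact ⟨(p : ℤ) / 2, by omega⟩
    exact ⟨-j, 1, by omega⟩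
  have hq2 : (2 * (p : ℤ)) ∣ w ^ 2 + K := hcop.mul_dvd h2dvd hw2
  exact ⟨2 * (p : ℤ), w, by omega, ⟨c, by linarith⟩, hw1, hq2⟩


private lemma magic_core (K q w : ℤ) (hK : 7 ≤ K) (hq1 : 1 ≤ q)
    (hd1 : K ∣ q + 1) (hd2 : K ∣ w + 1) (hd3 : q ∣ w ^ 2 + K) :
    ∃ c₁ c₃ c₂ : ℤ, q = K * c₁ - 1 ∧ w = K * c₃ - 1 ∧ K * q * c₂ = w ^ 2 + K + q := by
  obtain ⟨c₁, h1⟩ := hd1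
  obtain ⟨c₃, h3⟩ := hd2
  have hcop : IsCoprime K q := ⟨c₁, -1, by linarith⟩
  have hKX : K ∣ w ^ 2 + K + q := by
    refine ⟨c₃ * (w - 1) + 1 + c₁, ?_⟩
    have expand : w ^ 2 + K + q = (w + 1) * (w - 1) + K + (q + 1) := by ring
    rw [expand, h1, h3]; ring
  have hqX : q ∣ w ^ 2 + K + q := by
    obtain ⟨m, hm⟩ := hd3
    exact ⟨m + 1, by rw [show w ^ 2 + K + q = (w ^ 2 + K) + q by ring, hm]; ring⟩
  obtain ⟨c₂, h2⟩ := hcop.mul_dvd hKX hqX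
  exact ⟨c₁, c₃, c₂, by linarith, by linarith, by linarith⟩

theorem threeSq (K : ℤ) (hK : 1 ≤ K)
    (h8 : K % 8 = 1 ∨ K % 8 = 2 ∨ K % 8 = 3 ∨ K % 8 = 5 ∨ K % 8 = 6) :
    ∃ x y z : ℤ, x ^ 2 + y ^ 2 + z ^ 2 = K := by
  rcases lt_or_ge K 7 with hlt | hge
  · interval_cases K
    · exact ⟨1, 0, 0, by norm_num⟩
    · exact ⟨1, 1, 0, by norm_num⟩
    · exact ⟨1, 1, 1, by norm_num⟩
    · exact absurd h8 (by norm_num)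
    · exact ⟨2, 1, 0, by norm_num⟩
    · exact ⟨2, 1, 1, by norm_num⟩
  · obtain ⟨q, w, hq1, hd1, hd2, hd3⟩ : ∃ q w : ℤ, 1 ≤ q ∧ K ∣ q + 1 ∧ K ∣ w + 1 ∧
        q ∣ w ^ 2 + K := by
      rcases h8 with h | h | h | h | h
      · exact magic_A K hge (by omega)
      · exact magic_B K hge (by omega)
      · exact magic_C K hge h
      · exact magic_A K hge (by omega)
      · exact magic_B K hge (by omega)
    obtain ⟨c₁, c₃, c₂, e1, e2, e3⟩ := magic_core K q w hge hq1 hd1 hd2 hd3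
    subst e1
    subst e2
    have hq0 : 1 ≤ K * c₁ - 1 := hq1
    have hdet : K * (c₁ * c₂ - c₃ ^ 2) - 1 * (1 * c₂ - 1 * c₃) + 1 * (1 * c₃ - c₁ * 1) = 1 := by
      have hKne : K ≠ 0 := by omega
      apply mul_left_cancel₀ hKne
      linear_combination e3
    have hpos : ∀ x y z : ℤ, ¬(x = 0 ∧ y = 0 ∧ z = 0) → 1 ≤ tQ K c₁ c₂ 1 1 c₃ x y z := by
      intro x y z hxyz
      have hid : K * (K * c₁ - 1) * tQ K c₁ c₂ 1 1 c₃ x y z =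
          (K * c₁ - 1) * (K * x + y + z) ^ 2 + ((K * c₁ - 1) * y + (K * c₃ - 1) * z) ^ 2 +
            K * z ^ 2 := by
        simp only [tQ]; linear_combination (z ^ 2) * e3
      by_contra hcon
      push_neg at hcon
      have hcon' : tQ K c₁ c₂ 1 1 c₃ x y z ≤ 0 := by omega
      have hKq : 1 ≤ K * (K * c₁ - 1) := by nlinarith
      have hsum : (K * c₁ - 1) * (K * x + y + z) ^ 2 + ((K * c₁ - 1) * y + (K * c₃ - 1) * z) ^ 2 +
          K * z ^ 2 ≤ 0 := by nlinarith
      have hz2 : z ^ 2 ≤ 0 := by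
        nlinarith [sq_nonneg (K * x + y + z), sq_nonneg ((K * c₁ - 1) * y + (K * c₃ - 1) * z),
          sq_nonneg z]
      have hz : z = 0 := by
        have : z ^ 2 = 0 := le_antisymm hz2 (sq_nonneg z)
        exact pow_eq_zero_iff (by norm_num) |>.mp this
      subst hz
      have hy2 : ((K * c₁ - 1) * y) ^ 2 ≤ 0 := by
        nlinarith [sq_nonneg (K * x + y + 0), sq_nonneg ((K * c₁ - 1) * y)]
      have hy : y = 0 := by
        have h0 : ((K * c₁ - 1) * y) ^ 2 = 0 :=
          le_antisymm hy2 (sq_nonneg _)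
        have := pow_eq_zero_iff (n := 2) (by norm_num) |>.mp h0
        rcases mul_eq_zero.mp this with h | h
        · omega
        · exact h
      subst hy
      have hx2 : (K * x) ^ 2 ≤ 0 := by nlinarith [sq_nonneg (K * x)]
      have hx : x = 0 := by
        have h0 : (K * x) ^ 2 = 0 := le_antisymm hx2 (sq_nonneg _)
        have := pow_eq_zero_iff (n := 2) (by norm_num) |>.mp h0
        rcases mul_eq_zero.mp this with h | h
        · omega
        · exact h
      exact hxyz ⟨hx, rfl, rfl⟩
    obtain ⟨r, s, t, hrst⟩ := ternary_detOne K c₁ c₂ 1 1 c₃ hpos hdet 1 0 0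
    refine ⟨r, s, t, ?_⟩
    rw [← hrst]
    simp only [tQ]; ring


/-! ### Pattern lemma: from three squares to `2a²+3b²+6d²` -/

private lemma pattern_core (x1 x2 x3 K : ℤ) (h : x1 ^ 2 + x2 ^ 2 + x3 ^ 2 = K)
    (hpar : (x1 - x2) % 2 = 0) (h3 : K % 3 ≠ 1) :
    ∃ a b d : ℤ, 2 * a ^ 2 + 3 * b ^ 2 + 6 * d ^ 2 = K := by
  -- find signs s, t with 3 ∣ x1 - s*x2 - 2*t*x3
  have key : ∃ s t : ℤ, s ^ 2 = 1 ∧ t ^ 2 = 1 ∧ (3 : ℤ) ∣ (x1 - s * x2 - 2 * (t * x3)) := by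
    have a1 := sq3a x1; have a2 := sq3a x2; have a3 := sq3a x3
    have b1 := sq3b x1; have b2 := sq3b x2; have b3 := sq3b x3
    have h1 : x1 % 3 = 0 ∨ x1 % 3 = 1 ∨ x1 % 3 = 2 := by omega
    have h2 : x2 % 3 = 0 ∨ x2 % 3 = 1 ∨ x2 % 3 = 2 := by omega
    have h3' : x3 % 3 = 0 ∨ x3 % 3 = 1 ∨ x3 % 3 = 2 := by omega
    rcases h1 with h1 | h1 | h1 <;> rcases h2 with h2 | h2 | h2 <;>
      rcases h3' with h3'' | h3'' | h3''
    · exact ⟨1, 1, by norm_num, by norm_num, by omega⟩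
    · exfalso; omega
    · exfalso; omega
    · exfalso; omega
    · exact ⟨1, 1, by norm_num, by norm_num, by omega⟩
    · exact ⟨1, -1, by norm_num, by norm_num, by omega⟩
    · exfalso; omega
    · exact ⟨1, -1, by norm_num, by norm_num, by omega⟩
    · exact ⟨1, 1, by norm_num, by norm_num, by omega⟩
    · exfalso; omega
    · exact ⟨1, -1, by norm_num, by norm_num, by omega⟩
    · exact ⟨1, 1, by norm_num, by norm_num, by omega⟩
    · exact ⟨1, 1, by norm_num, by norm_num, by omega⟩
    · exact ⟨-1, 1, by norm_num, by norm_num, by omega⟩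
    · exact ⟨-1, -1, by norm_num, by norm_num, by omega⟩
    · exact ⟨-1, 1, by norm_num, by norm_num, by omega⟩
    · exact ⟨1, 1, by norm_num, by norm_num, by omega⟩
    · exact ⟨1, -1, by norm_num, by norm_num, by omega⟩
    · exfalso; omega
    · exact ⟨1, 1, by norm_num, by norm_num, by omega⟩
    · exact ⟨1, -1, by norm_num, by norm_num, by omega⟩
    · exact ⟨-1, 1, by norm_num, by norm_num, by omega⟩
    · exact ⟨1, -1, by norm_num, by norm_num, by omega⟩
    · exact ⟨1, 1, by norm_num, by norm_num, by omega⟩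
    · exact ⟨1, 1, by norm_num, by norm_num, by omega⟩
    · exact ⟨-1, -1, by norm_num, by norm_num, by omega⟩
    · exact ⟨-1, 1, by norm_num, by norm_num, by omega⟩
  obtain ⟨s, t, hs, ht, hdvd⟩ := key
  -- set y2 := s * x2, y3 := t * x3; same squares
  set y2 := s * x2 with hy2
  set y3 := t * x3 with hy3
  have hsq : x1 ^ 2 + y2 ^ 2 + y3 ^ 2 = K := by
    have : y2 ^ 2 = x2 ^ 2 := by
      rw [hy2]; rw [mul_pow, hs, one_mul]
    have h3q : y3 ^ 2 = x3 ^ 2 := by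
      rw [hy3]; rw [mul_pow, ht, one_mul]
    rw [this, h3q]; exact h
  have hpar2 : (x1 - y2) % 2 = 0 := by
    have hs' : s = 1 ∨ s = -1 := by
      rcases (by nlinarith [sq_nonneg (s-1), sq_nonneg (s+1)] : (s-1)*(s+1) = 0) with h
      rcases mul_eq_zero.mp h with h | h
      · left; linarith
      · right; linarith
    rcases hs' with rfl | rfl <;> simp [hy2] <;> omega
  obtain ⟨D, hD⟩ : ∃ D, x1 - y2 - 2 * y3 = 6 * D := by
    have h2' : (2 : ℤ) ∣ (x1 - y2 - 2 * y3) := by omega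
    have h6 : (6 : ℤ) ∣ (x1 - y2 - 2 * y3) := by
      rcases hdvd with ⟨k, hk⟩
      omega
    exact h6
  obtain ⟨A, hA⟩ : ∃ A, x1 + y2 = 2 * A := by
    refine ⟨(x1 + y2) / 2, by omega⟩
  refine ⟨A, y3 + 2 * D, D, ?_⟩
  have hx1 : x1 = A + (y3 + 2 * D) + D := by omega
  have hx2 : y2 = A - (y3 + 2 * D) - D := by omega
  rw [hx1, hx2] at hsq
  linear_combination hsq

private lemma pattern (u v w K : ℤ) (h : u ^ 2 + v ^ 2 + w ^ 2 = K) (h3 : K % 3 ≠ 1) :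
    ∃ a b d : ℤ, 2 * a ^ 2 + 3 * b ^ 2 + 6 * d ^ 2 = K := by
  have hu : u % 2 = 0 ∨ u % 2 = 1 := by omega
  have hv : v % 2 = 0 ∨ v % 2 = 1 := by omega
  have hw : w % 2 = 0 ∨ w % 2 = 1 := by omega
  rcases hu with hu | hu <;> rcases hv with hv | hv <;> rcases hw with hw | hw
  · exact pattern_core u v w K (by linarith) (by omega) h3
  · exact pattern_core u v w K (by linarith) (by omega) h3
  · exact pattern_core u w v K (by linarith) (by omega) h3
  · exact pattern_core v w u K (by linarith) (by omega) h3
  · exact pattern_core v w u K (by linarith) (by omega) h3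
  · exact pattern_core u w v K (by linarith) (by omega) h3
  · exact pattern_core u v w K (by linarith) (by omega) h3
  · exact pattern_core u v w K (by linarith) (by omega) h3

/-! ### The quaternary form 2a²+3b²+4c²+6d² -/

private lemma mainCase (M c : ℤ) (h101 : 101 ≤ M)
    (h8 : (M - 4 * c ^ 2) % 8 = 1 ∨ (M - 4 * c ^ 2) % 8 = 2 ∨ (M - 4 * c ^ 2) % 8 = 3 ∨
      (M - 4 * c ^ 2) % 8 = 5 ∨ (M - 4 * c ^ 2) % 8 = 6)
    (h3 : (M - 4 * c ^ 2) % 3 ≠ 1)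
    (hc2 : 4 * c ^ 2 ≤ 64)
    (hodd : M % 2 = 1 ∨ (M - 4 * c ^ 2) % 8 = 6)
    (hc0 : M % 3 ≠ 0 ∨ c ≠ 0) :
    ∃ a b c' d : ℤ, 2 * a ^ 2 + 3 * b ^ 2 + 4 * c' ^ 2 + 6 * d ^ 2 = M ∧
      ¬(a = 0 ∧ c' = 0) ∧ ¬(b = 0 ∧ d = 0) := by
  have hK1 : 1 ≤ M - 4 * c ^ 2 := by omega
  obtain ⟨x, y, z, hxyz⟩ := threeSq (M - 4 * c ^ 2) hK1 h8
  obtain ⟨a, b, d, habd⟩ := pattern x y z (M - 4 * c ^ 2) hxyz h3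
  refine ⟨a, b, c, d, by linarith, ?_, ?_⟩
  · rintro ⟨rfl, rfl⟩
    have hM3 : M = 3 * (b ^ 2 + 2 * d ^ 2) := by linarith
    have : M % 3 = 0 := by omega
    rcases hc0 with hc0 | hc0
    · exact hc0 this
    · exact hc0 rfl
  · rintro ⟨rfl, rfl⟩
    have hKa : M - 4 * c ^ 2 = 2 * a ^ 2 := by linarith
    have := sq4a a
    rcases hodd with hodd | hodd <;> omega

private lemma smallTable (M : ℤ) (h7 : 7 ≤ M) (hle : M ≤ 100) (h23 : M ≠ 23) :
    ∃ a b c d : ℤ, 2 * a ^ 2 + 3 * b ^ 2 + 4 * c ^ 2 + 6 * d ^ 2 = M ∧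
      ¬(a = 0 ∧ c = 0) ∧ ¬(b = 0 ∧ d = 0) := by
  interval_cases M
  · exact ⟨0, 1, 1, 0, by norm_num, by norm_num, by norm_num⟩
  · exact ⟨1, 0, 0, 1, by norm_num, by norm_num, by norm_num⟩
  · exact ⟨1, 1, 1, 0, by norm_num, by norm_num, by norm_num⟩
  · exact ⟨0, 0, 1, 1, by norm_num, by norm_num, by norm_num⟩
  · exact ⟨1, 1, 0, 1, by norm_num, by norm_num, by norm_num⟩
  · exact ⟨1, 0, 1, 1, by norm_num, by norm_num, by norm_num⟩
  · exact ⟨0, 1, 1, 1, by norm_num, by norm_num, by norm_num⟩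
  · exact ⟨1, 2, 0, 0, by norm_num, by norm_num, by norm_num⟩
  · exact ⟨1, 1, 1, 1, by norm_num, by norm_num, by norm_num⟩
  · exact ⟨0, 2, 1, 0, by norm_num, by norm_num, by norm_num⟩
  · exact ⟨2, 1, 0, 1, by norm_num, by norm_num, by norm_num⟩
  · exact ⟨1, 2, 1, 0, by norm_num, by norm_num, by norm_num⟩
  · exact ⟨0, 1, 2, 0, by norm_num, by norm_num, by norm_num⟩
  · exact ⟨1, 2, 0, 1, by norm_num, by norm_num, by norm_num⟩
  · exact ⟨1, 1, 2, 0, by norm_num, by norm_num, by norm_num⟩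
  · exact ⟨0, 0, 2, 1, by norm_num, by norm_num, by norm_num⟩
  · exact absurd rfl h23
  · exact ⟨1, 0, 2, 1, by norm_num, by norm_num, by norm_num⟩
  · exact ⟨0, 1, 2, 1, by norm_num, by norm_num, by norm_num⟩
  · exact ⟨1, 0, 0, 2, by norm_num, by norm_num, by norm_num⟩
  · exact ⟨1, 1, 2, 1, by norm_num, by norm_num, by norm_num⟩
  · exact ⟨0, 0, 1, 2, by norm_num, by norm_num, by norm_num⟩
  · exact ⟨1, 1, 0, 2, by norm_num, by norm_num, by norm_num⟩
  · exact ⟨1, 0, 1, 2, by norm_num, by norm_num, by norm_num⟩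
  · exact ⟨0, 1, 1, 2, by norm_num, by norm_num, by norm_num⟩
  · exact ⟨2, 0, 0, 2, by norm_num, by norm_num, by norm_num⟩
  · exact ⟨1, 1, 1, 2, by norm_num, by norm_num, by norm_num⟩
  · exact ⟨0, 2, 2, 1, by norm_num, by norm_num, by norm_num⟩
  · exact ⟨1, 3, 0, 1, by norm_num, by norm_num, by norm_num⟩
  · exact ⟨1, 2, 2, 1, by norm_num, by norm_num, by norm_num⟩
  · exact ⟨0, 3, 1, 1, by norm_num, by norm_num, by norm_num⟩
  · exact ⟨1, 2, 0, 2, by norm_num, by norm_num, by norm_num⟩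
  · exact ⟨0, 1, 3, 0, by norm_num, by norm_num, by norm_num⟩
  · exact ⟨0, 0, 2, 2, by norm_num, by norm_num, by norm_num⟩
  · exact ⟨1, 1, 3, 0, by norm_num, by norm_num, by norm_num⟩
  · exact ⟨0, 0, 3, 1, by norm_num, by norm_num, by norm_num⟩
  · exact ⟨0, 1, 2, 2, by norm_num, by norm_num, by norm_num⟩
  · exact ⟨1, 0, 3, 1, by norm_num, by norm_num, by norm_num⟩
  · exact ⟨0, 1, 3, 1, by norm_num, by norm_num, by norm_num⟩
  · exact ⟨3, 0, 1, 2, by norm_num, by norm_num, by norm_num⟩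
  · exact ⟨1, 1, 3, 1, by norm_num, by norm_num, by norm_num⟩
  · exact ⟨0, 2, 3, 0, by norm_num, by norm_num, by norm_num⟩
  · exact ⟨0, 3, 2, 1, by norm_num, by norm_num, by norm_num⟩
  · exact ⟨1, 2, 3, 0, by norm_num, by norm_num, by norm_num⟩
  · exact ⟨1, 3, 2, 1, by norm_num, by norm_num, by norm_num⟩
  · exact ⟨0, 2, 2, 2, by norm_num, by norm_num, by norm_num⟩
  · exact ⟨1, 3, 0, 2, by norm_num, by norm_num, by norm_num⟩
  · exact ⟨0, 2, 3, 1, by norm_num, by norm_num, by norm_num⟩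
  · exact ⟨0, 3, 1, 2, by norm_num, by norm_num, by norm_num⟩
  · exact ⟨1, 0, 0, 3, by norm_num, by norm_num, by norm_num⟩
  · exact ⟨1, 3, 1, 2, by norm_num, by norm_num, by norm_num⟩
  · exact ⟨0, 0, 1, 3, by norm_num, by norm_num, by norm_num⟩
  · exact ⟨1, 1, 0, 3, by norm_num, by norm_num, by norm_num⟩
  · exact ⟨0, 0, 3, 2, by norm_num, by norm_num, by norm_num⟩
  · exact ⟨0, 1, 1, 3, by norm_num, by norm_num, by norm_num⟩
  · exact ⟨1, 0, 3, 2, by norm_num, by norm_num, by norm_num⟩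
  · exact ⟨0, 1, 3, 2, by norm_num, by norm_num, by norm_num⟩
  · exact ⟨0, 4, 2, 0, by norm_num, by norm_num, by norm_num⟩
  · exact ⟨1, 1, 3, 2, by norm_num, by norm_num, by norm_num⟩
  · exact ⟨1, 4, 2, 0, by norm_num, by norm_num, by norm_num⟩
  · exact ⟨0, 1, 4, 0, by norm_num, by norm_num, by norm_num⟩
  · exact ⟨1, 2, 0, 3, by norm_num, by norm_num, by norm_num⟩
  · exact ⟨0, 3, 3, 1, by norm_num, by norm_num, by norm_num⟩
  · exact ⟨0, 0, 2, 3, by norm_num, by norm_num, by norm_num⟩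
  · exact ⟨1, 3, 3, 1, by norm_num, by norm_num, by norm_num⟩
  · exact ⟨0, 2, 3, 2, by norm_num, by norm_num, by norm_num⟩
  · exact ⟨0, 1, 2, 3, by norm_num, by norm_num, by norm_num⟩
  · exact ⟨1, 2, 3, 2, by norm_num, by norm_num, by norm_num⟩
  · exact ⟨1, 1, 2, 3, by norm_num, by norm_num, by norm_num⟩
  · exact ⟨0, 2, 4, 0, by norm_num, by norm_num, by norm_num⟩
  · exact ⟨1, 5, 0, 0, by norm_num, by norm_num, by norm_num⟩
  · exact ⟨1, 2, 4, 0, by norm_num, by norm_num, by norm_num⟩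
  · exact ⟨0, 5, 1, 0, by norm_num, by norm_num, by norm_num⟩
  · exact ⟨2, 2, 3, 2, by norm_num, by norm_num, by norm_num⟩
  · exact ⟨1, 5, 1, 0, by norm_num, by norm_num, by norm_num⟩
  · exact ⟨0, 2, 2, 3, by norm_num, by norm_num, by norm_num⟩
  · exact ⟨1, 3, 0, 3, by norm_num, by norm_num, by norm_num⟩
  · exact ⟨0, 4, 3, 0, by norm_num, by norm_num, by norm_num⟩
  · exact ⟨0, 3, 1, 3, by norm_num, by norm_num, by norm_num⟩
  · exact ⟨1, 4, 3, 0, by norm_num, by norm_num, by norm_num⟩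
  · exact ⟨0, 3, 3, 2, by norm_num, by norm_num, by norm_num⟩
  · exact ⟨0, 0, 4, 2, by norm_num, by norm_num, by norm_num⟩
  · exact ⟨1, 3, 3, 2, by norm_num, by norm_num, by norm_num⟩
  · exact ⟨0, 0, 3, 3, by norm_num, by norm_num, by norm_num⟩
  · exact ⟨0, 1, 4, 2, by norm_num, by norm_num, by norm_num⟩
  · exact ⟨1, 0, 3, 3, by norm_num, by norm_num, by norm_num⟩
  · exact ⟨0, 1, 3, 3, by norm_num, by norm_num, by norm_num⟩
  · exact ⟨3, 2, 4, 0, by norm_num, by norm_num, by norm_num⟩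
  · exact ⟨1, 1, 3, 3, by norm_num, by norm_num, by norm_num⟩
  · exact ⟨2, 0, 4, 2, by norm_num, by norm_num, by norm_num⟩
  · exact ⟨0, 3, 2, 3, by norm_num, by norm_num, by norm_num⟩
  · exact ⟨1, 0, 0, 4, by norm_num, by norm_num, by norm_num⟩
  · exact ⟨1, 3, 2, 3, by norm_num, by norm_num, by norm_num⟩
  · exact ⟨0, 0, 1, 4, by norm_num, by norm_num, by norm_num⟩

lemma lemmaB (M : ℤ) (h7 : 7 ≤ M) (h23 : M ≠ 23) :
    ∃ a b c d : ℤ, 2 * a ^ 2 + 3 * b ^ 2 + 4 * c ^ 2 + 6 * d ^ 2 = M ∧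
      ¬(a = 0 ∧ c = 0) ∧ ¬(b = 0 ∧ d = 0) := by
  have key : ∀ N : ℕ, ∀ M : ℤ, M.toNat = N → 7 ≤ M → M ≠ 23 →
      ∃ a b c d : ℤ, 2 * a ^ 2 + 3 * b ^ 2 + 4 * c ^ 2 + 6 * d ^ 2 = M ∧
        ¬(a = 0 ∧ c = 0) ∧ ¬(b = 0 ∧ d = 0) := by
    intro N
    induction N using Nat.strong_induction_on with
    | _ N ih =>
      intro M hN h7 h23
      by_cases hle : M ≤ 100
      · exact smallTable M h7 hle h23
      · push_neg at hle
        by_cases h4 : (4 : ℤ) ∣ M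
        · obtain ⟨M', rfl⟩ := h4
          obtain ⟨a, b, c, d, hQ, hac, hbd⟩ :=
            ih M'.toNat (by omega) M' rfl (by omega) (by omega)
          refine ⟨2 * a, 2 * b, 2 * c, 2 * d, by linarith, ?_, ?_⟩
          · rintro ⟨ha, hc⟩
            exact hac ⟨by linarith, by linarith⟩
          · rintro ⟨hb, hd⟩
            exact hbd ⟨by linarith, by linarith⟩
        · have h101 : 101 ≤ M := by omega
          have hm : M % 24 = 1 ∨ M % 24 = 2 ∨ M % 24 = 3 ∨ M % 24 = 5 ∨ M % 24 = 6 ∨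
              M % 24 = 7 ∨ M % 24 = 9 ∨ M % 24 = 10 ∨ M % 24 = 11 ∨ M % 24 = 13 ∨
              M % 24 = 14 ∨ M % 24 = 15 ∨ M % 24 = 17 ∨ M % 24 = 18 ∨ M % 24 = 19 ∨
              M % 24 = 21 ∨ M % 24 = 22 ∨ M % 24 = 23 := by omega
          rcases hm with hm|hm|hm|hm|hm|hm|hm|hm|hm|hm|hm|hm|hm|hm|hm|hm|hm|hm
          · exact mainCase M 1 h101 (by omega) (by omega) (by norm_num) (by omega) (by omega)
          · exact mainCase M 3 h101 (by omega) (by omega) (by norm_num) (by omega) (by omega)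
          · exact mainCase M 2 h101 (by omega) (by omega) (by norm_num) (by omega)
              (by right; norm_num)
          · exact mainCase M 0 h101 (by omega) (by omega) (by norm_num) (by omega) (by omega)
          · exact mainCase M 2 h101 (by omega) (by omega) (by norm_num) (by omega)
              (by right; norm_num)
          · exact mainCase M 1 h101 (by omega) (by omega) (by norm_num) (by omega) (by omega)
          · exact mainCase M 1 h101 (by omega) (by omega) (by norm_num) (by omega)
              (by right; norm_num)
          · exact mainCase M 1 h101 (by omega) (by omega) (by norm_num) (by omega) (by omega)
          · exact mainCase M 0 h101 (by omega) (by omega) (by norm_num) (by omega) (by omega)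
          · exact mainCase M 1 h101 (by omega) (by omega) (by norm_num) (by omega) (by omega)
          · exact mainCase M 0 h101 (by omega) (by omega) (by norm_num) (by omega) (by omega)
          · exact mainCase M 1 h101 (by omega) (by omega) (by norm_num) (by omega)
              (by right; norm_num)
          · exact mainCase M 0 h101 (by omega) (by omega) (by norm_num) (by omega) (by omega)
          · exact mainCase M 1 h101 (by omega) (by omega) (by norm_num) (by omega)
              (by right; norm_num)
          · exact mainCase M 2 h101 (by omega) (by omega) (by norm_num) (by omega) (by omega)
          · exact mainCase M 1 h101 (by omega) (by omega) (by norm_num) (by omega)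
              (by right; norm_num)
          · exact mainCase M 2 h101 (by omega) (by omega) (by norm_num) (by omega) (by omega)
          · exact mainCase M 3 h101 (by omega) (by omega) (by norm_num) (by omega) (by omega)
  exact key M.toNat M rfl h7 h23

/-! ### Lemma A : good representations of 3v by x²+2y² -/

private lemma stepS (g h : ℤ) (hg : ¬ (3 : ℤ) ∣ g) (hh : ¬ (3 : ℤ) ∣ h) :
    ∃ y z : ℤ, y ^ 2 + 2 * z ^ 2 = 3 * (g ^ 2 + 2 * h ^ 2) ∧
      ¬ (3 : ℤ) ∣ y ∧ ¬ (3 : ℤ) ∣ z := by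
  by_cases hc : (3 : ℤ) ∣ (g + h)
  · exact ⟨g + 2 * h, g - h, by ring, by omega, by omega⟩
  · exact ⟨g - 2 * h, g + h, by ring, by omega, hc⟩

private lemma oneGood (g h : ℤ) (hgood : ¬ ((3 : ℤ) ∣ g ↔ (3 : ℤ) ∣ h)) :
    ∃ y z : ℤ, y ^ 2 + 2 * z ^ 2 = 3 * (g ^ 2 + 2 * h ^ 2) ∧
      ¬ (3 : ℤ) ∣ y ∧ ¬ (3 : ℤ) ∣ z := by
  exact ⟨g - 2 * h, g + h, by ring, by omega, by omega⟩

lemma lemmaA (g h : ℤ) (hv : 1 ≤ g ^ 2 + 2 * h ^ 2) :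
    ∃ y z : ℤ, y ^ 2 + 2 * z ^ 2 = 3 * (g ^ 2 + 2 * h ^ 2) ∧
      ¬ (3 : ℤ) ∣ y ∧ ¬ (3 : ℤ) ∣ z := by
  have key : ∀ N : ℕ, ∀ g h : ℤ, (g ^ 2 + 2 * h ^ 2).toNat = N → 1 ≤ g ^ 2 + 2 * h ^ 2 →
      ∃ y z : ℤ, y ^ 2 + 2 * z ^ 2 = 3 * (g ^ 2 + 2 * h ^ 2) ∧
        ¬ (3 : ℤ) ∣ y ∧ ¬ (3 : ℤ) ∣ z := by
    intro N
    induction N using Nat.strong_induction_on with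
    | _ N ih =>
      intro g h hN hv
      by_cases hg : (3 : ℤ) ∣ g
      · by_cases hh : (3 : ℤ) ∣ h
        · -- both divisible : descend
          obtain ⟨g', rfl⟩ := hg
          obtain ⟨h', rfl⟩ := hh
          have hv' : 1 ≤ g' ^ 2 + 2 * h' ^ 2 := by nlinarith
          have hlt : (g' ^ 2 + 2 * h' ^ 2).toNat < N := by
            have h9 : (3 * g') ^ 2 + 2 * (3 * h') ^ 2 = 9 * (g' ^ 2 + 2 * h' ^ 2) := by ring
            omega
          obtain ⟨y1, z1, e1, d1, d2⟩ := ih _ hlt g' h' rfl hv'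
          obtain ⟨y2, z2, e2, d3, d4⟩ := stepS y1 z1 d1 d2
          obtain ⟨y3, z3, e3, d5, d6⟩ := stepS y2 z2 d3 d4
          refine ⟨y3, z3, ?_, d5, d6⟩
          rw [e3, e2, e1]; ring
        · exact oneGood g h (by tauto)
      · by_cases hh : (3 : ℤ) ∣ h
        · exact oneGood g h (by tauto)
        · exact stepS g h hg hh
  exact key _ g h rfl hv

/-! ### The exceptional value 18 -/

private lemma P8_nonneg (x : ℤ) : 0 ≤ P8 x := by
  unfold P8
  rcases le_or_gt x 0 with h | h <;> nlinarith

private lemma no18 (a b c d : ℤ) (h : 2 * P8 a + 3 * P8 b + 4 * P8 c + 6 * P8 d = 18) :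
    False := by
  have na := P8_nonneg a
  have nb := P8_nonneg b
  have nc := P8_nonneg c
  have nd := P8_nonneg d
  unfold P8 at h na nb nc nd
  have ha1 : -1 ≤ a := by nlinarith [sq_nonneg (a + 2)]
  have ha2 : a ≤ 2 := by nlinarith [sq_nonneg (a - 3)]
  have hb1 : -1 ≤ b := by nlinarith [sq_nonneg (b + 2)]
  have hb2 : b ≤ 2 := by nlinarith [sq_nonneg (b - 2)]
  have hc1 : 0 ≤ c := by nlinarith [sq_nonneg (c + 1)]
  have hc2 : c ≤ 1 := by nlinarith [sq_nonneg (c - 2)]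
  have hd1 : 0 ≤ d := by nlinarith [sq_nonneg (d + 1)]
  have hd2 : d ≤ 1 := by nlinarith [sq_nonneg (d - 2)]
  interval_cases a <;> interval_cases b <;> interval_cases c <;> interval_cases d <;>
    norm_num at h

/-! ### Main theorem -/

private lemma one_le_sq (a : ℤ) (ha : a ≠ 0) : 1 ≤ a ^ 2 := by
  rcases (by omega : a ≤ -1 ∨ 1 ≤ a) with h | h <;> nlinarith

private lemma one_le_norm (a c : ℤ) (h : ¬(a = 0 ∧ c = 0)) : 1 ≤ a ^ 2 + 2 * c ^ 2 := by
  rcases eq_or_ne a 0 with rfl | ha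
  · have hc : c ≠ 0 := by tauto
    nlinarith [one_le_sq c hc]
  · nlinarith [one_le_sq a ha, sq_nonneg c]

private lemma signfix (y : ℤ) (h : ¬ (3 : ℤ) ∣ y) : ∃ x : ℤ, 3 * x - 1 = y ∨ 3 * x - 1 = -y := by
  have h3 : y % 3 = 1 ∨ y % 3 = 2 := by omega
  rcases h3 with h3 | h3
  · exact ⟨(-y + 1) / 3, Or.inr (by omega)⟩
  · exact ⟨(y + 1) / 3, Or.inl (by omega)⟩

theorem rep_p8_2346 (n : ℤ) (hn : 2 ≤ n) :
    (∃ x₁ x₂ x₃ x₄ : ℤ, 2 * P8 x₁ + 3 * P8 x₂ + 4 * P8 x₃ + 6 * P8 x₄ = n) ↔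
      n ≠ 18 := by
  constructor
  · rintro ⟨a, b, c, d, h⟩ rfl
    exact no18 a b c d h
  · intro hne
    obtain ⟨a, b, c, d, hQ, hac, hbd⟩ := lemmaB (n + 5) (by omega) (by omega)
    obtain ⟨y1, y3, e1, d1, d3⟩ := lemmaA a c (one_le_norm a c hac)
    obtain ⟨y2, y4, e2, d2, d4⟩ := lemmaA b d (one_le_norm b d hbd)
    obtain ⟨x1, hx1⟩ := signfix y1 d1
    obtain ⟨x2, hx2⟩ := signfix y2 d2
    obtain ⟨x3, hx3⟩ := signfix y3 d3
    obtain ⟨x4, hx4⟩ := signfix y4 d4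
    have k1 : 3 * P8 x1 = y1 ^ 2 - 1 := by
      rcases hx1 with h | h <;> unfold P8 <;> nlinarith [h]
    have k2 : 3 * P8 x2 = y2 ^ 2 - 1 := by
      rcases hx2 with h | h <;> unfold P8 <;> nlinarith [h]
    have k3 : 3 * P8 x3 = y3 ^ 2 - 1 := by
      rcases hx3 with h | h <;> unfold P8 <;> nlinarith [h]
    have k4 : 3 * P8 x4 = y4 ^ 2 - 1 := by
      rcases hx4 with h | h <;> unfold P8 <;> nlinarith [h]
    refine ⟨x1, x2, x3, x4, ?_⟩
    have h3 : 3 * (2 * P8 x1 + 3 * P8 x2 + 4 * P8 x3 + 6 * P8 x4) = 3 * n := by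
      linarith
    linarith
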